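/- Let μ and ν be Borel probability measures on ℝ^d, both absolutely continuous with respect to the Lebesgue measure. If T₁ and T₂ are Borel triangular monotone transport maps from μ to ν, then T₁ = T₂ μ-almost everywhere. -/

import Mathlib

open MeasureTheory

/-- A map `T : ℝ^d → ℝ^d` is triangular monotone if its `k`-th component only depends on the
first `k` coordinates and is non-decreasing in the `k`-th coordinate when the previous ones
are fixed. -/
def TriangularMonotone {d : ℕ} (T : (Fin d → ℝ) → (Fin d → ℝ)) : Prop :=
  (∀ k : Fin d, ∀ x y : Fin d → ℝ, (∀ j : Fin d, j ≤ k → x j = y j) → T x k = T y k) ∧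
  (∀ k : Fin d, ∀ x y : Fin d → ℝ, (∀ j : Fin d, j < k → x j = y j) → x k ≤ y k →
    T x k ≤ T y k)

namespace KRUnique

open ProbabilityTheory
open scoped ENNReal

lemma isLowerSet_measurableSet {s : Set ℝ} (hs : IsLowerSet s) : MeasurableSet s :=
  hs.ordConnected.measurableSet

lemma isUpperSet_measurableSet {s : Set ℝ} (hs : IsUpperSet s) : MeasurableSet s :=
  hs.ordConnected.measurableSet

/-- Uniqueness of monotone transport maps on `ℝ`. -/
lemma mono_transport_unique {μ : Measure ℝ} [IsFiniteMeasure μ] {f g : ℝ → ℝ}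
    (hf : Monotone f) (hg : Monotone g) (hfm : Measurable f) (hgm : Measurable g)
    (h : μ.map f = μ.map g) : f =ᵐ[μ] g := by
  have key : ∀ q : ℚ, ∀ᵐ x ∂μ, (f x ≤ q ↔ g x ≤ q) := by
    intro q
    set A : Set ℝ := f ⁻¹' Set.Iic q with hA
    set B : Set ℝ := g ⁻¹' Set.Iic q with hB
    have hAl : IsLowerSet A := fun x y hyx hx => le_trans (hf hyx) hx
    have hBl : IsLowerSet B := fun x y hyx hx => le_trans (hg hyx) hx
    have hAm : MeasurableSet A := hfm measurableSet_Iic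
    have hBm : MeasurableSet B := hgm measurableSet_Iic
    have hμ : μ A = μ B := by
      rw [hA, hB, ← Measure.map_apply hfm measurableSet_Iic,
        ← Measure.map_apply hgm measurableSet_Iic, h]
    have hsymm : μ ((A \ B) ∪ (B \ A)) = 0 := by
      rcases hAl.total hBl with hsub | hsub
      · have h1 : A \ B = ∅ := Set.diff_eq_empty.mpr hsub
        have h2 : μ (B \ A) = 0 := by
          have h3 : μ (B \ A) ≤ μ B - μ A := by
            rw [measure_diff hsub hAm.nullMeasurableSet (measure_ne_top μ A)]
          rw [hμ, tsub_self] at h3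
          exact le_antisymm h3 zero_le
        rw [h1, Set.empty_union]; exact h2
      · have h1 : B \ A = ∅ := Set.diff_eq_empty.mpr hsub
        have h2 : μ (A \ B) = 0 := by
          have h3 : μ (A \ B) ≤ μ A - μ B := by
            rw [measure_diff hsub hBm.nullMeasurableSet (measure_ne_top μ B)]
          rw [hμ, tsub_self] at h3
          exact le_antisymm h3 zero_le
        rw [h1, Set.union_empty]; exact h2
    refine (measure_mono_null ?_ hsymm : μ {x | ¬(f x ≤ q ↔ g x ≤ q)} = 0)
    intro x hx
    simp only [Set.mem_setOf_eq, not_iff] at hx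
    by_cases hfx : f x ≤ q
    · exact Or.inl ⟨hfx, fun hgx => (hx.mpr hgx) hfx⟩
    · exact Or.inr ⟨hx.mp hfx, hfx⟩
  have : ∀ᵐ x ∂μ, ∀ q : ℚ, (f x ≤ q ↔ g x ≤ q) := ae_all_iff.mpr key
  filter_upwards [this] with x hx
  by_contra hne
  rcases lt_or_gt_of_ne hne with hlt | hlt
  · obtain ⟨q, hq1, hq2⟩ := exists_rat_btwn hlt
    exact absurd ((hx q).mp hq1.le) (not_le.mpr hq2)
  · obtain ⟨q, hq1, hq2⟩ := exists_rat_btwn hlt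
    exact absurd ((hx q).mpr hq1.le) (not_le.mpr hq2)


/-- Generalized (left-continuous) inverse of a monotone function. -/
noncomputable def finv (f : ℝ → ℝ) (b : ℝ) : ℝ := sInf {a | b ≤ f a}

lemma measurable_finv {f : ℝ → ℝ} (hf : Monotone f) : Measurable (finv f) := by
  set M : Set ℝ := {b | {a | b ≤ f a}.Nonempty ∧ BddBelow {a | b ≤ f a}} with hM
  have hsub : ∀ {b b' : ℝ}, b ≤ b' → {a | b' ≤ f a} ⊆ {a | b ≤ f a} :=
    fun h a ha => le_trans h ha
  have hMc : Mᶜ = {b | ¬ {a | b ≤ f a}.Nonempty} ∪ {b | ¬ BddBelow {a | b ≤ f a}} := by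
    ext b; simp only [hM, Set.mem_compl_iff, Set.mem_setOf_eq, Set.mem_union, not_and_or]
  have hU : IsUpperSet {b : ℝ | ¬ {a | b ≤ f a}.Nonempty} := by
    intro b b' hbb hb hne
    exact hb (hne.mono (hsub hbb))
  have hL : IsLowerSet {b : ℝ | ¬ BddBelow {a | b ≤ f a}} := by
    intro b b' hbb hb hbdd
    exact hb (hbdd.mono (hsub hbb))
  have hMm : MeasurableSet M := by
    rw [← compl_compl M, hMc]
    exact ((isUpperSet_measurableSet hU).union (isLowerSet_measurableSet hL)).compl
  have hmono : MonotoneOn (finv f) M := by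
    intro b hb b' hb' hbb
    exact csInf_le_csInf hb.2 hb'.1 (hsub hbb)
  have hzero : ∀ b ∉ M, finv f b = 0 := by
    intro b hb
    rw [hM, Set.mem_setOf_eq, not_and_or] at hb
    rcases hb with hb | hb
    · rw [Set.not_nonempty_iff_eq_empty] at hb
      rw [finv, hb, Real.sInf_empty]
    · exact Real.sInf_of_not_bddBelow hb
  -- measurability via preimages of Iio
  refine measurable_of_Iio (fun t => ?_)
  have hdecomp : finv f ⁻¹' Set.Iio t =
      (M ∩ ↑(lowerClosure (M ∩ finv f ⁻¹' Set.Iio t))) ∪ (Mᶜ ∩ {b : ℝ | (0:ℝ) < t}) := by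
    ext b
    constructor
    · intro hb
      by_cases hbM : b ∈ M
      · exact Or.inl ⟨hbM, subset_lowerClosure ⟨hbM, hb⟩⟩
      · refine Or.inr ⟨hbM, ?_⟩
        have := hzero b hbM
        simpa [Set.mem_preimage, this] using hb
    · rintro (⟨hbM, hcl⟩ | ⟨hbM, h0⟩)
      · obtain ⟨c, ⟨hcM, hc⟩, hbc⟩ := hcl
        exact lt_of_le_of_lt (hmono hbM hcM hbc) hc
      · simpa [Set.mem_preimage, hzero b hbM] using h0
  rw [hdecomp]
  refine (hMm.inter (isLowerSet_measurableSet (lowerClosure _).lower)).union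
    (hMm.compl.inter ?_)
  by_cases h0 : (0:ℝ) < t
  · simpa [h0] using MeasurableSet.univ
  · simpa [h0] using MeasurableSet.empty

lemma finv_comp_ae {μ : Measure ℝ} {f : ℝ → ℝ} (hf : Monotone f)
    (hlevel : ∀ c : ℝ, μ (f ⁻¹' {c}) = 0) : ∀ᵐ a ∂μ, finv f (f a) = a := by
  have hN : μ (⋃ q : ℚ, f ⁻¹' {f q}) = 0 :=
    measure_iUnion_null (fun q => hlevel (f q))
  rw [MeasureTheory.ae_iff]
  refine measure_mono_null ?_ hN
  intro a ha
  simp only [Set.mem_setOf_eq] at ha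
  by_contra hmem
  -- show a is in some level set of a rational
  have hS : {a' | f a ≤ f a'} = Set.Ici a := by
    ext a'
    simp only [Set.mem_setOf_eq, Set.mem_Ici]
    constructor
    · intro h
      by_contra hlt
      push_neg at hlt
      -- a' < a with f a ≤ f a', so f a' = f a; contradiction with ha unless a in rational level
      have heq : f a' = f a := le_antisymm (hf hlt.le) h
      obtain ⟨q, hq1, hq2⟩ := exists_rat_btwn hlt
      have hfq : f (q:ℝ) = f a := le_antisymm (hf hq2.le) (heq ▸ hf hq1.le)
      exact hmem (Set.mem_iUnion.mpr ⟨q, show a ∈ f ⁻¹' {f (q:ℝ)} from Set.mem_preimage.mpr hfq.symm⟩)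
    · intro h; exact hf h
  exact ha (by rw [finv, hS, csInf_Ici])

lemma ennreal_inv_mul_le_one (x : ℝ≥0∞) : x⁻¹ * x ≤ 1 := by
  rcases eq_or_ne x 0 with rfl | h0
  · simp
  · rcases eq_or_ne x ∞ with rfl | htop
    · simp
    · rw [ENNReal.inv_mul_cancel h0 htop]

variable {α Ω : Type*} [MeasurableSpace α] [MeasurableSpace Ω] [StandardBorelSpace Ω] [Nonempty Ω]

/-- Absolute continuity is inherited by conditional kernels. -/
lemma condKernel_absolutelyContinuous (ρ γ : Measure (α × Ω))
    [IsFiniteMeasure ρ] [IsFiniteMeasure γ] (hργ : ρ ≪ γ) :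
    ∀ᵐ a ∂ρ.fst, ρ.condKernel a ≪ γ.condKernel a := by
  set h : α × Ω → ℝ≥0∞ := fun p => if ρ.rnDeriv γ p = ∞ then 0 else ρ.rnDeriv γ p with hh
  have hhm : Measurable h := Measurable.ite (Measure.measurable_rnDeriv ρ γ (measurableSet_singleton ∞))
    measurable_const (Measure.measurable_rnDeriv ρ γ)
  have hhne : ∀ p, h p ≠ ∞ := by
    intro p
    by_cases hp : ρ.rnDeriv γ p = ∞ <;> simp [hh, hp]
  have haedens : h =ᵐ[γ] ρ.rnDeriv γ := by
    filter_upwards [Measure.rnDeriv_lt_top ρ γ] with p hp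
    simp [hh, hp.ne]
  have hrn : γ.withDensity h = ρ := by
    rw [withDensity_congr_ae haedens]
    exact Measure.withDensity_rnDeriv_eq ρ γ hργ
  have hhu : Measurable (Function.uncurry (fun a b => h (a, b))) := by
    exact hhm
  set κ' : Kernel α Ω := Kernel.withDensity γ.condKernel (fun a b => h (a, b)) with hκ'
  haveI hκ'sf : IsSFiniteKernel κ' :=
    Kernel.IsSFiniteKernel.withDensity γ.condKernel (fun a b => hhne (a, b))
  have hκ'app : ∀ a, κ' a = (γ.condKernel a).withDensity (fun b => h (a, b)) :=
    fun a => Kernel.withDensity_apply _ hhu a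
  -- γ.fst ⊗ₘ κ' = ρ
  have hcomp : γ.fst ⊗ₘ κ' = ρ := by
    ext s hs
    rw [Measure.compProd_apply hs]
    have h1 : ∀ a, κ' a (Prod.mk a ⁻¹' s) = ∫⁻ b in Prod.mk a ⁻¹' s, h (a, b) ∂(γ.condKernel a) :=
      fun a => by rw [hκ'app a, withDensity_apply _ (measurable_prodMk_left hs)]
    calc ∫⁻ a, κ' a (Prod.mk a ⁻¹' s) ∂γ.fst
        = ∫⁻ a, ∫⁻ b, (Prod.mk a ⁻¹' s).indicator (fun b => h (a, b)) b ∂(γ.condKernel a) ∂γ.fst := by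
          refine lintegral_congr (fun a => ?_)
          rw [h1 a, lintegral_indicator (measurable_prodMk_left hs)]
      _ = ∫⁻ a, ∫⁻ b, s.indicator h (a, b) ∂(γ.condKernel a) ∂γ.fst := by
          refine lintegral_congr (fun a => lintegral_congr (fun b => ?_))
          by_cases hab : (a, b) ∈ s <;> simp [Set.indicator, hab]
      _ = ∫⁻ p, s.indicator h p ∂(γ.fst ⊗ₘ γ.condKernel) :=
          (Measure.lintegral_compProd (hhm.indicator hs)).symm
      _ = ρ s := by
          rw [γ.disintegrate γ.condKernel, lintegral_indicator hs, ← withDensity_apply' _ s, hrn]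
  -- normalization function
  set c : α → ℝ≥0∞ := fun a => κ' a Set.univ with hc
  have hcm : Measurable c := κ'.measurable_coe MeasurableSet.univ
  have hfst : ρ.fst = γ.fst.withDensity c := by
    ext s hs
    rw [Measure.fst_apply hs, ← hcomp, Measure.compProd_apply (measurable_fst hs),
      withDensity_apply _ hs, ← lintegral_indicator hs]
    refine lintegral_congr (fun a => ?_)
    by_cases ha : a ∈ s
    · have hpre : (Prod.mk a ⁻¹' (Prod.fst ⁻¹' s) : Set Ω) = Set.univ := by
        ext b; simp [ha]
      simp [Set.indicator, hpre, ha, hc]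
    · have hpre : (Prod.mk a ⁻¹' (Prod.fst ⁻¹' s) : Set Ω) = ∅ := by
        ext b; simp [ha]
      simp [Set.indicator, hpre, ha]
  -- c is a.e. finite w.r.t. γ.fst
  have hcfin : ∀ᵐ a ∂γ.fst, c a ≠ ∞ := by
    refine (ae_lt_top hcm ?_).mono (fun a ha => ha.ne)
    have hint : ∫⁻ a, c a ∂γ.fst = ρ Set.univ := by
      rw [← hcomp, Measure.compProd_apply MeasurableSet.univ]
      simp [hc]
    rw [hint]
    exact measure_ne_top ρ _
  -- normalized kernel
  set κ'' : Kernel α Ω := ⟨fun a => (c a)⁻¹ • κ' a, by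
    refine Measure.measurable_of_measurable_coe _ (fun s hs => ?_)
    simp_rw [Measure.smul_apply, smul_eq_mul]
    exact (hcm.inv).mul (κ'.measurable_coe hs)⟩ with hκ''
  have hκ''app : ∀ a, κ'' a = (c a)⁻¹ • κ' a := fun a => rfl
  haveI hκ''fin : IsFiniteKernel κ'' := by
    refine ⟨⟨1, ENNReal.one_lt_top, fun a => ?_⟩⟩
    rw [hκ''app, Measure.smul_apply, smul_eq_mul]
    exact ennreal_inv_mul_le_one _
  -- ρ = ρ.fst ⊗ₘ κ''
  have hρcomp : ρ = ρ.fst ⊗ₘ κ'' := by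
    ext s hs
    have hmeas : Measurable (fun a => κ'' a (Prod.mk a ⁻¹' s)) :=
      Kernel.measurable_kernel_prodMk_left (κ := κ'') hs
    rw [Measure.compProd_apply hs, hfst,
      lintegral_withDensity_eq_lintegral_mul _ hcm hmeas]
    have hae : (fun a => c a * κ'' a (Prod.mk a ⁻¹' s)) =ᵐ[γ.fst]
        (fun a => κ' a (Prod.mk a ⁻¹' s)) := by
      filter_upwards [hcfin] with a hfin
      rw [hκ''app, Measure.smul_apply, smul_eq_mul, ← mul_assoc]
      rcases eq_or_ne (c a) 0 with h0 | h0
      · have : κ' a (Prod.mk a ⁻¹' s) = 0 :=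
          le_antisymm (h0 ▸ measure_mono (Set.subset_univ _)) zero_le
        simp [this]
      · rw [ENNReal.mul_inv_cancel h0 hfin, one_mul]
    simp only [Pi.mul_apply]
    rw [lintegral_congr_ae hae, ← Measure.compProd_apply hs, hcomp]
  haveI : StandardBorelSpace Ω := inferInstance
  have huniq : ∀ᵐ a ∂ρ.fst, κ'' a = ρ.condKernel a :=
    eq_condKernel_of_measure_eq_compProd κ'' hρcomp
  filter_upwards [huniq] with a ha
  rw [← ha, hκ''app]
  refine Measure.AbsolutelyContinuous.mk (fun s hs hs0 => ?_)
  rw [Measure.smul_apply, smul_eq_mul, hκ'app]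
  rw [(withDensity_absolutelyContinuous (γ.condKernel a) _) hs0, mul_zero]


variable {E : Type*} [MeasurableSpace E] [StandardBorelSpace E] [Nonempty E]

lemma fst_map_eq (μt : Measure (ℝ × E)) {f : ℝ → ℝ} (hfm : Measurable f)
    {G : ℝ × E → E} (hGm : Measurable G) :
    (μt.map (fun p => (f p.1, G p))).fst = μt.fst.map f := by
  have hΦm : Measurable (fun p : ℝ × E => (f p.1, G p)) :=
    (hfm.comp measurable_fst).prodMk hGm
  unfold Measure.fst
  rw [Measure.map_map measurable_fst hΦm, Measure.map_map hfm measurable_fst]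
  rfl

/-- Pushforward compatibility of disintegrations along `(a, y) ↦ (f a, G (a, y))`
with `f` monotone and atomless image. -/
lemma key_transport (μt νt : Measure (ℝ × E)) [IsProbabilityMeasure μt] [IsProbabilityMeasure νt]
    {f : ℝ → ℝ} (hfmono : Monotone f) (hfm : Measurable f)
    {G : ℝ × E → E} (hGm : Measurable G)
    (hmap : μt.map (fun p => (f p.1, G p)) = νt)
    (hatom : ∀ c : ℝ, νt.fst {c} = 0) :
    ∀ᵐ a ∂μt.fst, (μt.condKernel a).map (fun y => G (a, y)) = νt.condKernel (f a) := by
  set Φ : ℝ × E → ℝ × E := fun p => (f p.1, G p) with hΦ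
  have hΦm : Measurable Φ := (hfm.comp measurable_fst).prodMk hGm
  have hfst : νt.fst = μt.fst.map f := by rw [← hmap]; exact fst_map_eq μt hfm hGm
  have hlevel : ∀ c : ℝ, μt.fst (f ⁻¹' {c}) = 0 := by
    intro c
    have h := hatom c
    rwa [hfst, Measure.map_apply hfm (measurableSet_singleton c)] at h
  have hinv : ∀ᵐ a ∂μt.fst, finv f (f a) = a := finv_comp_ae hfmono hlevel
  have hGa : ∀ a : ℝ, Measurable (fun y => G (a, y)) :=
    fun a => hGm.comp measurable_prodMk_left
  -- pushforward kernel
  set κG : Kernel ℝ E := ⟨fun a => (μt.condKernel a).map (fun y => G (a, y)), by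
    refine Measure.measurable_of_measurable_coe _ (fun s hs => ?_)
    have : ∀ a : ℝ, (μt.condKernel a).map (fun y => G (a, y)) s
        = μt.condKernel a (Prod.mk a ⁻¹' (G ⁻¹' s)) := by
      intro a
      rw [Measure.map_apply (hGa a) hs]; rfl
    simp_rw [this]
    exact Kernel.measurable_kernel_prodMk_left (hGm hs)⟩ with hκG
  have hκGapp : ∀ a, κG a = (μt.condKernel a).map (fun y => G (a, y)) := fun _ => rfl
  haveI : IsMarkovKernel κG := by
    refine ⟨fun a => ?_⟩
    rw [hκGapp]
    exact Measure.isProbabilityMeasure_map (hGa a).aemeasurable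
  set η : Kernel ℝ E := κG.comap (finv f) (measurable_finv hfmono) with hη
  have hηapp : ∀ b, η b = κG (finv f b) := fun b => rfl
  have hν : νt = νt.fst ⊗ₘ η := by
    ext s hs
    rw [Measure.compProd_apply hs, hfst,
      lintegral_map (Kernel.measurable_kernel_prodMk_left (κ := η) hs) hfm]
    have hae : ∀ᵐ a ∂μt.fst, η (f a) (Prod.mk (f a) ⁻¹' s)
        = μt.condKernel a (Prod.mk a ⁻¹' (Φ ⁻¹' s)) := by
      filter_upwards [hinv] with a ha
      rw [hηapp, ha, hκGapp, Measure.map_apply (hGa a) (measurable_prodMk_left hs)]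
      rfl
    rw [lintegral_congr_ae hae]
    have : ∫⁻ a, μt.condKernel a (Prod.mk a ⁻¹' (Φ ⁻¹' s)) ∂μt.fst
        = (μt.fst ⊗ₘ μt.condKernel) (Φ ⁻¹' s) :=
      (Measure.compProd_apply (hΦm hs)).symm
    rw [this, μt.disintegrate μt.condKernel, ← Measure.map_apply hΦm hs, hmap]
  have huniq : ∀ᵐ b ∂νt.fst, η b = νt.condKernel b :=
    eq_condKernel_of_measure_eq_compProd η hν
  rw [hfst] at huniq
  have huniq' : ∀ᵐ a ∂μt.fst, η (f a) = νt.condKernel (f a) :=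
    ae_of_ae_map hfm.aemeasurable huniq
  filter_upwards [hinv, huniq'] with a ha hu
  rw [← hu, hηapp, ha, hκGapp]

/-- The conditional kernel of a product measure is a.e. constant. -/
lemma condKernel_prod (p₁ : Measure ℝ) (p₂ : Measure E) [IsFiniteMeasure p₁]
    [IsProbabilityMeasure p₂] :
    ∀ᵐ a ∂(p₁.prod p₂).fst, (p₁.prod p₂).condKernel a = p₂ := by
  have h : p₁.prod p₂ = (p₁.prod p₂).fst ⊗ₘ Kernel.const ℝ p₂ := by
    rw [Measure.fst_prod, Measure.compProd_const]
  have := eq_condKernel_of_measure_eq_compProd (Kernel.const ℝ p₂) h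
  filter_upwards [this] with a ha
  rw [← ha, Kernel.const_apply]

/-- Conditional kernels of a measure absolutely continuous w.r.t. a σ-finite product measure
are a.e. absolutely continuous w.r.t. the second factor. -/
lemma condKernel_ac_volume (μt : Measure (ℝ × E)) [IsProbabilityMeasure μt]
    (volE : Measure E) [SigmaFinite volE] (hE : volE ≠ 0)
    (hac : μt ≪ (volume : Measure ℝ).prod volE) :
    ∀ᵐ a ∂μt.fst, μt.condKernel a ≪ volE := by
  obtain ⟨m₁, hm₁fin, hv₁, hm₁⟩ := exists_isFiniteMeasure_absolutelyContinuous (volume : Measure ℝ)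
  obtain ⟨m₂, hm₂fin, hv₂, hm₂⟩ := exists_isFiniteMeasure_absolutelyContinuous volE
  haveI := hm₁fin; haveI := hm₂fin
  have hm₁0 : m₁ Set.univ ≠ 0 := by
    intro h0
    rw [Measure.measure_univ_eq_zero] at h0
    rw [h0] at hv₁
    have : (volume : Measure ℝ) = 0 := by
      ext s hs; exact hv₁ (by simp)
    exact (by simpa using congrArg (fun m : Measure ℝ => m (Set.Icc 0 1)) this)
  have hm₂0 : m₂ Set.univ ≠ 0 := by
    intro h0
    rw [Measure.measure_univ_eq_zero] at h0
    rw [h0] at hv₂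
    refine hE ?_
    ext s hs; exact hv₂ (by simp)
  set p₁ : Measure ℝ := (m₁ Set.univ)⁻¹ • m₁ with hp₁
  set p₂ : Measure E := (m₂ Set.univ)⁻¹ • m₂ with hp₂
  haveI : IsProbabilityMeasure p₁ :=
    ⟨by rw [hp₁, Measure.smul_apply, smul_eq_mul, ENNReal.inv_mul_cancel hm₁0 (measure_ne_top m₁ _)]⟩
  haveI : IsProbabilityMeasure p₂ :=
    ⟨by rw [hp₂, Measure.smul_apply, smul_eq_mul, ENNReal.inv_mul_cancel hm₂0 (measure_ne_top m₂ _)]⟩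
  have hvp₁ : (volume : Measure ℝ) ≪ p₁ := by
    refine hv₁.trans (Measure.AbsolutelyContinuous.mk (fun s hs h0 => ?_))
    rw [hp₁, Measure.smul_apply, smul_eq_mul] at h0
    rcases mul_eq_zero.mp h0 with h | h
    · exact absurd h (ENNReal.inv_ne_zero.mpr (measure_ne_top m₁ _))
    · exact h
  have hvp₂ : volE ≪ p₂ := by
    refine hv₂.trans (Measure.AbsolutelyContinuous.mk (fun s hs h0 => ?_))
    rw [hp₂, Measure.smul_apply, smul_eq_mul] at h0
    rcases mul_eq_zero.mp h0 with h | h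
    · exact absurd h (ENNReal.inv_ne_zero.mpr (measure_ne_top m₂ _))
    · exact h
  have hp₂v : p₂ ≪ volE := by
    refine Measure.AbsolutelyContinuous.mk (fun s hs h0 => ?_)
    rw [hp₂, Measure.smul_apply, smul_eq_mul, hm₂ h0, mul_zero]
  set γ : Measure (ℝ × E) := p₁.prod p₂ with hγ
  haveI : IsProbabilityMeasure γ := by rw [hγ]; infer_instance
  have hμγ : μt ≪ γ := hac.trans (Measure.AbsolutelyContinuous.prod hvp₁ hvp₂)
  have h1 := condKernel_absolutelyContinuous μt γ hμγ
  have h2 : ∀ᵐ a ∂γ.fst, γ.condKernel a = p₂ := condKernel_prod p₁ p₂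
  have hfstac : μt.fst ≪ γ.fst := by
    unfold Measure.fst
    exact hμγ.map measurable_fst
  have h2' : ∀ᵐ a ∂μt.fst, γ.condKernel a = p₂ := hfstac.ae_le h2
  filter_upwards [h1, h2'] with a ha1 ha2
  rw [ha2] at ha1
  exact ha1.trans hp₂v


theorem aux : ∀ d : ℕ, ∀ μ ν : Measure (Fin d → ℝ),
    IsProbabilityMeasure μ → IsProbabilityMeasure ν →
    μ ≪ volume → ν ≪ volume →
    ∀ T₁ T₂ : (Fin d → ℝ) → (Fin d → ℝ),
    Measurable T₁ → Measurable T₂ →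
    TriangularMonotone T₁ → TriangularMonotone T₂ →
    μ.map T₁ = ν → μ.map T₂ = ν → T₁ =ᵐ[μ] T₂ := by
  intro d
  induction d with
  | zero =>
    intro μ ν _ _ _ _ T₁ T₂ _ _ _ _ _ _
    exact Filter.Eventually.of_forall (fun x => funext (fun k => k.elim0))
  | succ d ih =>
    intro μ ν hμprob hνprob hμac hνac T₁ T₂ hT₁m hT₂m hTr₁ hTr₂ hp₁ hp₂
    haveI := hμprob; haveI := hνprob
    set e : (Fin (d+1) → ℝ) ≃ᵐ ℝ × (Fin d → ℝ) :=
      MeasurableEquiv.piFinSuccAbove (fun _ : Fin (d+1) => ℝ) 0 with he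
    have hvol_e : MeasurePreserving e volume volume :=
      volume_preserving_piFinSuccAbove (fun _ : Fin (d+1) => ℝ) 0
    set μt : Measure (ℝ × (Fin d → ℝ)) := μ.map e with hμt
    set νt : Measure (ℝ × (Fin d → ℝ)) := ν.map e with hνt
    haveI : IsProbabilityMeasure μt := Measure.isProbabilityMeasure_map e.measurable.aemeasurable
    haveI : IsProbabilityMeasure νt := Measure.isProbabilityMeasure_map e.measurable.aemeasurable
    have hμt_ac : μt ≪ (volume : Measure (ℝ × (Fin d → ℝ))) := by
      have h := hμac.map e.measurable
      rwa [hvol_e.map_eq] at h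
    have hνt_ac : νt ≪ (volume : Measure (ℝ × (Fin d → ℝ))) := by
      have h := hνac.map e.measurable
      rwa [hvol_e.map_eq] at h
    -- the components
    set f₁ : ℝ → ℝ := fun a => T₁ (fun _ => a) 0 with hf₁
    set f₂ : ℝ → ℝ := fun a => T₂ (fun _ => a) 0 with hf₂
    set G₁ : ℝ × (Fin d → ℝ) → (Fin d → ℝ) := fun p k => T₁ (Fin.cons p.1 p.2) k.succ with hG₁
    set G₂ : ℝ × (Fin d → ℝ) → (Fin d → ℝ) := fun p k => T₂ (Fin.cons p.1 p.2) k.succ with hG₂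
    have hconsm : Measurable (fun p : ℝ × (Fin d → ℝ) => (Fin.cons p.1 p.2 : Fin (d+1) → ℝ)) := by
      refine measurable_pi_iff.mpr (fun j => ?_)
      refine Fin.cases ?_ ?_ j
      · simpa using measurable_fst
      · intro i
        simp only [Fin.cons_succ]
        exact (measurable_pi_apply i).comp measurable_snd
    have hf₁m : Measurable f₁ := by
      refine (measurable_pi_apply 0).comp (hT₁m.comp ?_)
      exact measurable_pi_lambda _ (fun _ => measurable_id)
    have hf₂m : Measurable f₂ := by
      refine (measurable_pi_apply 0).comp (hT₂m.comp ?_)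
      exact measurable_pi_lambda _ (fun _ => measurable_id)
    have hG₁m : Measurable G₁ :=
      measurable_pi_lambda _ (fun k => (measurable_pi_apply k.succ).comp (hT₁m.comp hconsm))
    have hG₂m : Measurable G₂ :=
      measurable_pi_lambda _ (fun k => (measurable_pi_apply k.succ).comp (hT₂m.comp hconsm))
    -- first component facts
    have hfix₁ : ∀ x : Fin (d+1) → ℝ, T₁ x 0 = f₁ (x 0) := by
      intro x
      refine hTr₁.1 0 x (fun _ => x 0) (fun j hj => ?_)
      rw [Fin.le_zero_iff.mp hj]
    have hfix₂ : ∀ x : Fin (d+1) → ℝ, T₂ x 0 = f₂ (x 0) := by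
      intro x
      refine hTr₂.1 0 x (fun _ => x 0) (fun j hj => ?_)
      rw [Fin.le_zero_iff.mp hj]
    have hf₁mono : Monotone f₁ := by
      intro a a' haa
      exact hTr₁.2 0 _ _ (fun j hj => absurd hj (Fin.not_lt_zero j)) haa
    have hf₂mono : Monotone f₂ := by
      intro a a' haa
      exact hTr₂.2 0 _ _ (fun j hj => absurd hj (Fin.not_lt_zero j)) haa
    -- commutation with e
    set Φ₁ : ℝ × (Fin d → ℝ) → ℝ × (Fin d → ℝ) := fun p => (f₁ p.1, G₁ p) with hΦ₁
    set Φ₂ : ℝ × (Fin d → ℝ) → ℝ × (Fin d → ℝ) := fun p => (f₂ p.1, G₂ p) with hΦ₂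
    have hΦ₁m : Measurable Φ₁ := (hf₁m.comp measurable_fst).prodMk hG₁m
    have hΦ₂m : Measurable Φ₂ := (hf₂m.comp measurable_fst).prodMk hG₂m
    have he_apply : ∀ x : Fin (d+1) → ℝ, e x = (x 0, Fin.tail x) := by
      intro x
      show ((Fin.insertNthEquiv (fun _ : Fin (d+1) => ℝ) 0).symm x) = (x 0, Fin.tail x)
      rw [Fin.insertNthEquiv_symm_apply]
      rw [Fin.removeNth_zero]
    have hcomm₁ : ∀ x : Fin (d+1) → ℝ, Φ₁ (e x) = e (T₁ x) := by
      intro x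
      rw [he_apply, he_apply]
      refine Prod.ext ?_ ?_
      · exact (hfix₁ x).symm
      · show G₁ (x 0, Fin.tail x) = Fin.tail (T₁ x)
        funext k
        show T₁ (Fin.cons (x 0) (Fin.tail x)) k.succ = T₁ x k.succ
        rw [Fin.cons_self_tail]
    have hcomm₂ : ∀ x : Fin (d+1) → ℝ, Φ₂ (e x) = e (T₂ x) := by
      intro x
      rw [he_apply, he_apply]
      refine Prod.ext ?_ ?_
      · exact (hfix₂ x).symm
      · show G₂ (x 0, Fin.tail x) = Fin.tail (T₂ x)
        funext k
        show T₂ (Fin.cons (x 0) (Fin.tail x)) k.succ = T₂ x k.succ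
        rw [Fin.cons_self_tail]
    have hmapΦ₁ : μt.map Φ₁ = νt := by
      rw [hμt, Measure.map_map hΦ₁m e.measurable, hνt, ← hp₁,
        Measure.map_map e.measurable hT₁m,
        show (Φ₁ ∘ ⇑e) = (⇑e ∘ T₁) from funext hcomm₁]
    have hmapΦ₂ : μt.map Φ₂ = νt := by
      rw [hμt, Measure.map_map hΦ₂m e.measurable, hνt, ← hp₂,
        Measure.map_map e.measurable hT₂m,
        show (Φ₂ ∘ ⇑e) = (⇑e ∘ T₂) from funext hcomm₂]
    -- atoms
    have hatom : ∀ c : ℝ, νt.fst {c} = 0 := by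
      intro c
      rw [Measure.fst_apply (measurableSet_singleton c)]
      refine hνt_ac ?_
      rw [Measure.volume_eq_prod]
      have hpre : Prod.fst ⁻¹' ({c} : Set ℝ) = ({c} : Set ℝ) ×ˢ (Set.univ : Set (Fin d → ℝ)) := by
        ext p
        constructor
        · intro h
          exact ⟨h, Set.mem_univ _⟩
        · intro h
          exact h.1
      rw [hpre, Measure.prod_prod]
      simp
    -- step A : first components agree
    have hfsteq₁ : μt.fst.map f₁ = νt.fst := by
      rw [← hmapΦ₁]; exact (fst_map_eq μt hf₁m hG₁m).symm
    have hfsteq₂ : μt.fst.map f₂ = νt.fst := by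
      rw [← hmapΦ₂]; exact (fst_map_eq μt hf₂m hG₂m).symm
    have hfeq : f₁ =ᵐ[μt.fst] f₂ :=
      mono_transport_unique hf₁mono hf₂mono hf₁m hf₂m (hfsteq₁.trans hfsteq₂.symm)
    -- step C : conditional transport
    have hkey₁ := key_transport μt νt hf₁mono hf₁m hG₁m hmapΦ₁ hatom
    have hkey₂ := key_transport μt νt hf₂mono hf₂m hG₂m hmapΦ₂ hatom
    -- step B : conditional absolute continuity
    have hEne : (volume : Measure (Fin d → ℝ)) ≠ 0 := by
      intro h0
      have h1 := congrArg (fun m : Measure (Fin d → ℝ) => m Set.univ) h0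
      simp only [Measure.coe_zero, Pi.zero_apply] at h1
      rw [volume_pi, Measure.pi_univ] at h1
      rcases Finset.prod_eq_zero_iff.mp h1 with ⟨i, _, hzero⟩
      rw [Real.volume_univ] at hzero
      exact ENNReal.top_ne_zero hzero
    have hacμ : ∀ᵐ a ∂μt.fst, μt.condKernel a ≪ (volume : Measure (Fin d → ℝ)) := by
      refine condKernel_ac_volume μt (volume : Measure (Fin d → ℝ)) hEne ?_
      rwa [← Measure.volume_eq_prod]
    have hacν : ∀ᵐ b ∂νt.fst, νt.condKernel b ≪ (volume : Measure (Fin d → ℝ)) := by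
      refine condKernel_ac_volume νt (volume : Measure (Fin d → ℝ)) hEne ?_
      rwa [← Measure.volume_eq_prod]
    have hacν' : ∀ᵐ a ∂μt.fst, νt.condKernel (f₁ a) ≪ (volume : Measure (Fin d → ℝ)) := by
      rw [← hfsteq₁] at hacν
      exact ae_of_ae_map hf₁m.aemeasurable hacν
    -- triangular monotonicity of the slices
    have hGtri : ∀ (T : (Fin (d+1) → ℝ) → (Fin (d+1) → ℝ)), TriangularMonotone T →
        ∀ a : ℝ, TriangularMonotone (fun (y : Fin d → ℝ) (k : Fin d) =>
          T (Fin.cons a y) k.succ) := by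
      intro T hT a
      constructor
      · intro k y y' hyy
        have h1 : ∀ j : Fin (d+1), j ≤ k.succ → (Fin.cons a y : Fin (d+1) → ℝ) j = (Fin.cons a y' : Fin (d+1) → ℝ) j := by
          intro j
          refine Fin.cases ?_ ?_ j
          · intro _
            simp
          · intro i hi
            simp only [Fin.cons_succ]
            exact hyy i (Fin.succ_le_succ_iff.mp hi)
        exact hT.1 k.succ (Fin.cons a y) (Fin.cons a y') h1
      · intro k y y' hyy hk
        have h1 : ∀ j : Fin (d+1), j < k.succ → (Fin.cons a y : Fin (d+1) → ℝ) j = (Fin.cons a y' : Fin (d+1) → ℝ) j := by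
          intro j
          refine Fin.cases ?_ ?_ j
          · intro _
            simp
          · intro i hi
            simp only [Fin.cons_succ]
            exact hyy i (Fin.succ_lt_succ_iff.mp hi)
        have h2 := hT.2 k.succ (Fin.cons a y) (Fin.cons a y') h1
          (by simpa only [Fin.cons_succ] using hk)
        simpa only [Fin.cons_succ] using h2
    -- combine everything a.e.
    have hGae : ∀ᵐ a ∂μt.fst, f₁ a = f₂ a ∧
        ∀ᵐ y ∂μt.condKernel a, G₁ (a, y) = G₂ (a, y) := by
      filter_upwards [hfeq, hkey₁, hkey₂, hacμ, hacν'] with a h1 h2 h3 h4 h5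
      refine ⟨h1, ?_⟩
      have h3' : (μt.condKernel a).map (fun y => G₂ (a, y)) = νt.condKernel (f₁ a) := by
        rw [h3, h1]
      exact ih (μt.condKernel a) (νt.condKernel (f₁ a)) inferInstance inferInstance h4 h5
        (fun y => G₁ (a, y)) (fun y => G₂ (a, y))
        (hG₁m.comp measurable_prodMk_left) (hG₂m.comp measurable_prodMk_left)
        (hGtri T₁ hTr₁ a) (hGtri T₂ hTr₂ a) h2 h3'
    have hmeasset : MeasurableSet {p : ℝ × (Fin d → ℝ) | Φ₁ p = Φ₂ p} :=
      measurableSet_eq_fun hΦ₁m hΦ₂m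
    have haept : ∀ᵐ p ∂μt, Φ₁ p = Φ₂ p := by
      rw [← μt.disintegrate μt.condKernel, Measure.ae_compProd_iff hmeasset]
      filter_upwards [hGae] with a ha
      filter_upwards [ha.2] with y hy
      show (f₁ a, G₁ (a, y)) = (f₂ a, G₂ (a, y))
      rw [ha.1, hy]
    have haemu : ∀ᵐ x ∂μ, Φ₁ (e x) = Φ₂ (e x) :=
      ae_of_ae_map e.measurable.aemeasurable haept
    filter_upwards [haemu] with x hx
    refine e.injective ?_
    rw [← hcomm₁ x, ← hcomm₂ x]
    exact hx


end KRUnique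

/-- Uniqueness part of the Knothe–Rosenblatt theorem: two Borel triangular monotone transport
maps between absolutely continuous probability measures coincide `μ`-a.e. -/
theorem knothe_rosenblatt_unique {d : ℕ}
    (μ ν : Measure (Fin d → ℝ)) [IsProbabilityMeasure μ] [IsProbabilityMeasure ν]
    (hμ : μ ≪ volume) (hν : ν ≪ volume)
    (T₁ T₂ : (Fin d → ℝ) → (Fin d → ℝ))
    (hT₁m : Measurable T₁) (hT₂m : Measurable T₂)
    (hT₁ : TriangularMonotone T₁) (hT₂ : TriangularMonotone T₂)
    (hp₁ : μ.map T₁ = ν) (hp₂ : μ.map T₂ = ν) :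
    T₁ =ᵐ[μ] T₂ :=
  KRUnique.aux d μ ν inferInstance inferInstance hμ hν T₁ T₂ hT₁m hT₂m hT₁ hT₂ hp₁ hp₂
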